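/- Drezner–Wesolowsky formula: for t₁, t₂ ∈ ℝ and ρ ∈ (-1,1), Φ_ρ(t₁,t₂) = (1/(2π))∫₀^ρ (1/√(1-r²))·exp(-(t₁² - 2rt₁t₂ + t₂²)/(2(1-r²))) dr + Φ(t₁)Φ(t₂). -/

import Mathlib

open MeasureTheory Real Set Filter Topology

/-- Standard normal CDF. -/
noncomputable def stdNormalCDF (t : ℝ) : ℝ :=
  ∫ x in Set.Iic t, (1 / Real.sqrt (2 * Real.pi)) * Real.exp (-x ^ 2 / 2)

/-- Standard bivariate normal density with correlation `ρ`. -/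
noncomputable def biNormalDensity (ρ x y : ℝ) : ℝ :=
  (1 / (2 * Real.pi * Real.sqrt (1 - ρ ^ 2))) *
    Real.exp (-(x ^ 2 - 2 * ρ * x * y + y ^ 2) / (2 * (1 - ρ ^ 2)))

/-- `Φ_ρ(t₁, t₂) = P[X ≤ t₁ ∧ Y ≤ t₂]` for jointly standard Gaussian `(X, Y)` with
correlation `ρ`.  For `ρ = ±1` the (degenerate) joint distribution gives the
indicated closed forms; for `ρ ∈ (-1, 1)` it is the double integral of the density. -/
noncomputable def biNormalCDF (ρ t₁ t₂ : ℝ) : ℝ :=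
  if ρ = 1 then stdNormalCDF (min t₁ t₂)
  else if ρ = -1 then max (stdNormalCDF t₁ + stdNormalCDF t₂ - 1) 0
  else ∫ x in Set.Iic t₁, ∫ y in Set.Iic t₂, biNormalDensity ρ x y

noncomputable def gss (x : ℝ) : ℝ := (1 / Real.sqrt (2 * Real.pi)) * Real.exp (-x ^ 2 / 2)

lemma gss_cont : Continuous gss := by
  unfold gss; fun_prop

lemma gss_pos (x : ℝ) : 0 < gss x := by
  unfold gss
  positivity

lemma exp_sq_integrable : Integrable (fun x : ℝ => Real.exp (-x ^ 2 / 2)) := by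
  have h := integrable_exp_neg_mul_sq (b := 1/2) (by norm_num)
  refine h.congr ?_
  filter_upwards with x
  ring_nf

lemma gss_integrable : Integrable gss := by
  unfold gss
  exact exp_sq_integrable.const_mul _

lemma absx_exp_integrable : Integrable (fun x : ℝ => |x| * Real.exp (-x ^ 2 / 2)) := by
  have h := (integrable_mul_exp_neg_mul_sq (b := 1/2) (by norm_num)).abs
  refine h.congr ?_
  filter_upwards with x
  rw [abs_mul, abs_of_nonneg (Real.exp_nonneg _)]
  ring_nf

lemma stdNormalCDF_eq (t : ℝ) : stdNormalCDF t = ∫ x in Set.Iic t, gss x := rfl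

lemma stdNormalCDF_hasDerivAt (t : ℝ) : HasDerivAt stdNormalCDF (gss t) t := by
  have key : ∀ s : ℝ, stdNormalCDF s = stdNormalCDF 0 + ∫ x in (0:ℝ)..s, gss x := by
    intro s
    rw [stdNormalCDF_eq, stdNormalCDF_eq,
      ← intervalIntegral.integral_Iic_sub_Iic gss_integrable.integrableOn
        gss_integrable.integrableOn]
    ring
  have : HasDerivAt (fun s => stdNormalCDF 0 + ∫ x in (0:ℝ)..s, gss x) (gss t) t := by
    refine HasDerivAt.const_add _ ?_
    exact intervalIntegral.integral_hasDerivAt_right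
      (gss_cont.intervalIntegrable _ _)
      (gss_cont.stronglyMeasurableAtFilter _ _)
      gss_cont.continuousAt
  simpa [← funext key] using this

lemma stdNormalCDF_continuous : Continuous stdNormalCDF :=
  continuous_iff_continuousAt.2 fun t => (stdNormalCDF_hasDerivAt t).continuousAt

lemma stdNormalCDF_tendsto_atBot : Tendsto stdNormalCDF atBot (𝓝 0) := by
  have h := intervalIntegral_tendsto_integral_Iic (0:ℝ)
    (gss_integrable.integrableOn) (tendsto_id (α := ℝ) (x := atBot))
  have h2 : Tendsto (fun a : ℝ => stdNormalCDF 0 - stdNormalCDF a) atBot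
      (𝓝 (stdNormalCDF 0)) := by
    refine h.congr ?_
    intro a
    rw [stdNormalCDF_eq, stdNormalCDF_eq,
      ← intervalIntegral.integral_Iic_sub_Iic gss_integrable.integrableOn
        gss_integrable.integrableOn]
    simp
  have := (tendsto_const_nhds (x := stdNormalCDF 0) (f := atBot)).sub h2
  simpa using this

lemma stdNormalCDF_nonneg (t : ℝ) : 0 ≤ stdNormalCDF t := by
  rw [stdNormalCDF_eq]
  exact setIntegral_nonneg measurableSet_Iic fun x _ => (gss_pos x).le

lemma stdNormalCDF_le (t : ℝ) : stdNormalCDF t ≤ ∫ x, gss x := by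
  rw [stdNormalCDF_eq]
  exact setIntegral_le_integral gss_integrable
    (Filter.Eventually.of_forall fun x => (gss_pos x).le)

lemma inner_integral {c : ℝ} (hc : 0 < c) (a t : ℝ) :
    ∫ y in Set.Iic t, gss ((y - a) / c) * (1 / c) = stdNormalCDF ((t - a) / c) := by
  have hint : Integrable (fun y : ℝ => gss ((y - a) / c) * (1 / c)) := by
    exact ((gss_integrable.comp_div hc.ne').comp_sub_right a).mul_const _
  have hderiv : ∀ y ∈ Set.Iic t, HasDerivAt (fun y => stdNormalCDF ((y - a) / c))
      (gss ((y - a) / c) * (1 / c)) y := by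
    intro y _
    have haff : HasDerivAt (fun y : ℝ => (y - a) / c) (1 / c) y := by
      simpa using ((hasDerivAt_id y).sub_const a).div_const c
    exact (stdNormalCDF_hasDerivAt _).comp y haff
  have htend : Tendsto (fun y : ℝ => stdNormalCDF ((y - a) / c)) atBot (𝓝 0) := by
    refine stdNormalCDF_tendsto_atBot.comp ?_
    apply Tendsto.atBot_div_const hc
    exact (tendsto_atBot_add_const_right atBot (-a) tendsto_id).congr (fun x => by simp [sub_eq_add_neg])
  simpa using integral_Iic_of_hasDerivAt_of_tendsto' hderiv hint.integrableOn htend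

lemma density_factor {r : ℝ} (hr : r ^ 2 < 1) (x y : ℝ) :
    biNormalDensity r x y
      = gss x * (gss ((y - r * x) / Real.sqrt (1 - r ^ 2)) * (1 / Real.sqrt (1 - r ^ 2))) := by
  have h1 : (0:ℝ) < 1 - r ^ 2 := by linarith
  have hs : (0:ℝ) < Real.sqrt (1 - r ^ 2) := Real.sqrt_pos.2 h1
  have hs2 : Real.sqrt (1 - r ^ 2) ^ 2 = 1 - r ^ 2 := Real.sq_sqrt h1.le
  have h2pi : (0:ℝ) < Real.sqrt (2 * Real.pi) := Real.sqrt_pos.2 (by positivity)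
  have hsq2pi : Real.sqrt (2 * Real.pi) ^ 2 = 2 * Real.pi := Real.sq_sqrt (by positivity)
  unfold biNormalDensity gss
  rw [show (1 / Real.sqrt (2 * Real.pi) * Real.exp (-x ^ 2 / 2)) *
        (1 / Real.sqrt (2 * Real.pi) *
            Real.exp (-((y - r * x) / Real.sqrt (1 - r ^ 2)) ^ 2 / 2) *
          (1 / Real.sqrt (1 - r ^ 2)))
      = (1 / (Real.sqrt (2 * Real.pi) * Real.sqrt (2 * Real.pi) * Real.sqrt (1 - r ^ 2))) *
        (Real.exp (-x ^ 2 / 2) *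
          Real.exp (-((y - r * x) / Real.sqrt (1 - r ^ 2)) ^ 2 / 2)) by ring,
    ← Real.exp_add]
  have hexp : -(x ^ 2 - 2 * r * x * y + y ^ 2) / (2 * (1 - r ^ 2))
      = -x ^ 2 / 2 + -((y - r * x) / Real.sqrt (1 - r ^ 2)) ^ 2 / 2 := by
    rw [div_pow, hs2]
    field_simp
    ring
  rw [hexp]
  congr 1
  rw [show Real.sqrt (2 * Real.pi) * Real.sqrt (2 * Real.pi)
      = Real.sqrt (2 * Real.pi) ^ 2 by ring, hsq2pi]

lemma biNormalCDF_rep {r : ℝ} (hr : r ∈ Set.Ioo (-1:ℝ) 1) (t₁ t₂ : ℝ) :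
    biNormalCDF r t₁ t₂
      = ∫ x in Set.Iic t₁, gss x * stdNormalCDF ((t₂ - r * x) / Real.sqrt (1 - r ^ 2)) := by
  obtain ⟨h1, h2⟩ := hr
  have hr2 : r ^ 2 < 1 := by nlinarith
  have hs : (0:ℝ) < Real.sqrt (1 - r ^ 2) := Real.sqrt_pos.2 (by nlinarith)
  rw [biNormalCDF, if_neg (by linarith), if_neg (by linarith)]
  refine integral_congr_ae (Filter.Eventually.of_forall fun x => ?_)
  calc ∫ y in Set.Iic t₂, biNormalDensity r x y
      = ∫ y in Set.Iic t₂,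
          gss x * (gss ((y - r * x) / Real.sqrt (1 - r ^ 2)) * (1 / Real.sqrt (1 - r ^ 2))) := by
        refine integral_congr_ae (Filter.Eventually.of_forall fun y => ?_)
        exact density_factor hr2 x y
    _ = gss x * ∫ y in Set.Iic t₂,
          gss ((y - r * x) / Real.sqrt (1 - r ^ 2)) * (1 / Real.sqrt (1 - r ^ 2)) :=
        integral_const_mul _ _
    _ = gss x * stdNormalCDF ((t₂ - r * x) / Real.sqrt (1 - r ^ 2)) := by
        rw [inner_integral hs]

noncomputable def DWF' (t₂ r x : ℝ) : ℝ :=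
  gss x * (gss ((t₂ - r * x) / Real.sqrt (1 - r ^ 2)) *
    ((r * t₂ - x) / ((1 - r ^ 2) * Real.sqrt (1 - r ^ 2))))

lemma u_hasDerivAt {r : ℝ} (hr : r ^ 2 < 1) (t₂ x : ℝ) :
    HasDerivAt (fun ρ : ℝ => (t₂ - ρ * x) / Real.sqrt (1 - ρ ^ 2))
      ((r * t₂ - x) / ((1 - r ^ 2) * Real.sqrt (1 - r ^ 2))) r := by
  have h1 : (0:ℝ) < 1 - r ^ 2 := by linarith
  have hs : (0:ℝ) < Real.sqrt (1 - r ^ 2) := Real.sqrt_pos.2 h1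
  have hs2 : Real.sqrt (1 - r ^ 2) ^ 2 = 1 - r ^ 2 := Real.sq_sqrt h1.le
  have hnum : HasDerivAt (fun ρ : ℝ => t₂ - ρ * x) (-x) r := by
    simpa using (hasDerivAt_mul_const x).const_sub t₂
  have hden : HasDerivAt (fun ρ : ℝ => Real.sqrt (1 - ρ ^ 2))
      (-(2 * r) / (2 * Real.sqrt (1 - r ^ 2))) r := by
    have h2 : HasDerivAt (fun ρ : ℝ => 1 - ρ ^ 2) (-(2 * r)) r := by
      simpa using (hasDerivAt_pow 2 r).const_sub 1
    exact h2.sqrt h1.ne'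
  have hd := hnum.div hden hs.ne'
  have hval : (-x * Real.sqrt (1 - r ^ 2)
        - (t₂ - r * x) * (-(2 * r) / (2 * Real.sqrt (1 - r ^ 2)))) / Real.sqrt (1 - r ^ 2) ^ 2
      = (r * t₂ - x) / ((1 - r ^ 2) * Real.sqrt (1 - r ^ 2)) := by
    set s := Real.sqrt (1 - r ^ 2) with hsdef
    clear_value s
    rw [← hs2]
    field_simp
    ring_nf
    linear_combination (-x) * hs2
  rw [← hval]
  exact hd

lemma DWF'_hasDerivAt {r : ℝ} (hr : r ^ 2 < 1) (t₂ x : ℝ) :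
    HasDerivAt (fun ρ : ℝ => gss x * stdNormalCDF ((t₂ - ρ * x) / Real.sqrt (1 - ρ ^ 2)))
      (DWF' t₂ r x) r := by
  have hu := u_hasDerivAt hr t₂ x
  have h := (stdNormalCDF_hasDerivAt ((t₂ - r * x) / Real.sqrt (1 - r ^ 2))).comp r hu
  exact h.const_mul (gss x)

lemma DWF'_eq {r : ℝ} (hr : r ^ 2 < 1) (t₂ x : ℝ) :
    DWF' t₂ r x
      = ((1 / (2 * Real.pi * Real.sqrt (1 - r ^ 2))) * Real.exp (-t₂ ^ 2 / 2) * (1 / (1 - r ^ 2)))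
        * ((r * t₂ - x) * Real.exp (-(x - r * t₂) ^ 2 / (2 * (1 - r ^ 2)))) := by
  have h1 : (0:ℝ) < 1 - r ^ 2 := by linarith
  have hs : (0:ℝ) < Real.sqrt (1 - r ^ 2) := Real.sqrt_pos.2 h1
  have hs2 : Real.sqrt (1 - r ^ 2) ^ 2 = 1 - r ^ 2 := Real.sq_sqrt h1.le
  have hsq2pi : Real.sqrt (2 * Real.pi) ^ 2 = 2 * Real.pi := Real.sq_sqrt (by positivity)
  have h2pi : (0:ℝ) < Real.sqrt (2 * Real.pi) := Real.sqrt_pos.2 (by positivity)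
  unfold DWF' gss
  have hexp : -x ^ 2 / 2 + -((t₂ - r * x) / Real.sqrt (1 - r ^ 2)) ^ 2 / 2
      = -t₂ ^ 2 / 2 + -(x - r * t₂) ^ 2 / (2 * (1 - r ^ 2)) := by
    rw [div_pow, hs2]
    field_simp
    ring
  calc (1 / Real.sqrt (2 * Real.pi) * Real.exp (-x ^ 2 / 2)) *
        (1 / Real.sqrt (2 * Real.pi) *
            Real.exp (-((t₂ - r * x) / Real.sqrt (1 - r ^ 2)) ^ 2 / 2) *
          ((r * t₂ - x) / ((1 - r ^ 2) * Real.sqrt (1 - r ^ 2))))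
      = (1 / (Real.sqrt (2 * Real.pi) * Real.sqrt (2 * Real.pi)))
          * (Real.exp (-x ^ 2 / 2) * Real.exp (-((t₂ - r * x) / Real.sqrt (1 - r ^ 2)) ^ 2 / 2))
          * ((r * t₂ - x) / ((1 - r ^ 2) * Real.sqrt (1 - r ^ 2))) := by ring
    _ = (1 / (2 * Real.pi))
          * (Real.exp (-t₂ ^ 2 / 2) * Real.exp (-(x - r * t₂) ^ 2 / (2 * (1 - r ^ 2))))
          * ((r * t₂ - x) / ((1 - r ^ 2) * Real.sqrt (1 - r ^ 2))) := by
        rw [← Real.exp_add, ← Real.exp_add, hexp,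
          show Real.sqrt (2 * Real.pi) * Real.sqrt (2 * Real.pi)
            = Real.sqrt (2 * Real.pi) ^ 2 by ring, hsq2pi]
    _ = _ := by field_simp

lemma DWF'_integrable {r : ℝ} (hr : r ^ 2 < 1) (t₂ : ℝ) :
    Integrable (fun x => DWF' t₂ r x) := by
  have h1 : (0:ℝ) < 1 - r ^ 2 := by linarith
  have hb : (0:ℝ) < 1 / (2 * (1 - r ^ 2)) := by positivity
  have base := ((integrable_mul_exp_neg_mul_sq hb).comp_sub_right (r * t₂)).neg
  have h := (base.const_mul
    ((1 / (2 * Real.pi * Real.sqrt (1 - r ^ 2))) * Real.exp (-t₂ ^ 2 / 2) * (1 / (1 - r ^ 2))))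
  refine h.congr (Filter.Eventually.of_forall fun x => ?_)
  simp only [Pi.neg_apply]
  rw [DWF'_eq hr]
  have : -(1 / (2 * (1 - r ^ 2))) * (x - r * t₂) ^ 2
      = -(x - r * t₂) ^ 2 / (2 * (1 - r ^ 2)) := by field_simp
  rw [this]
  ring

lemma antideriv_hasDerivAt {r : ℝ} (hr : r ^ 2 < 1) (t₂ x : ℝ) :
    HasDerivAt (fun x => (1 / (2 * Real.pi * Real.sqrt (1 - r ^ 2))) * Real.exp (-t₂ ^ 2 / 2) *
        Real.exp (-(x - r * t₂) ^ 2 / (2 * (1 - r ^ 2))))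
      (DWF' t₂ r x) x := by
  have h1 : (0:ℝ) < 1 - r ^ 2 := by linarith
  have hinner : HasDerivAt (fun x : ℝ => -(x - r * t₂) ^ 2 / (2 * (1 - r ^ 2)))
      (-(2 * (x - r * t₂) ^ 1 * 1) / (2 * (1 - r ^ 2))) x := by
    exact (((hasDerivAt_id x).sub_const (r * t₂)).pow 2).neg.div_const _
  have hexp := hinner.exp
  have h := hexp.const_mul
    ((1 / (2 * Real.pi * Real.sqrt (1 - r ^ 2))) * Real.exp (-t₂ ^ 2 / 2))
  refine h.congr_deriv ?_
  symm
  rw [DWF'_eq hr]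
  field_simp
  ring

lemma integral_DWF' {r : ℝ} (hr : r ^ 2 < 1) (t₁ t₂ : ℝ) :
    ∫ x in Set.Iic t₁, DWF' t₂ r x = biNormalDensity r t₁ t₂ := by
  have h1 : (0:ℝ) < 1 - r ^ 2 := by linarith
  have htend : Tendsto (fun x => (1 / (2 * Real.pi * Real.sqrt (1 - r ^ 2))) *
      Real.exp (-t₂ ^ 2 / 2) * Real.exp (-(x - r * t₂) ^ 2 / (2 * (1 - r ^ 2)))) atBot (𝓝 0) := by
    have hsq : Tendsto (fun x : ℝ => -(x - r * t₂) ^ 2 / (2 * (1 - r ^ 2))) atBot atBot := by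
      apply Tendsto.atBot_div_const (by positivity)
      apply tendsto_neg_atTop_atBot.comp
      have habs : Tendsto (fun x : ℝ => |x - r * t₂|) atBot atTop :=
        tendsto_abs_atBot_atTop.comp (tendsto_atBot_add_const_right atBot (-(r * t₂))
          tendsto_id |>.congr (fun x => by simp only [id_eq]; ring))
      have := (tendsto_pow_atTop (n := 2) two_ne_zero).comp habs
      refine this.congr fun x => ?_
      simp [sq_abs]
    have := Real.tendsto_exp_atBot.comp hsq
    have h2 := this.const_mul
      ((1 / (2 * Real.pi * Real.sqrt (1 - r ^ 2))) * Real.exp (-t₂ ^ 2 / 2))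
    simpa using h2
  have := integral_Iic_of_hasDerivAt_of_tendsto' (a := t₁)
    (fun x _ => antideriv_hasDerivAt hr t₂ x) (DWF'_integrable hr t₂).integrableOn htend
  rw [this, sub_zero]
  simp only [biNormalDensity]
  rw [mul_assoc, ← Real.exp_add]
  congr 1
  field_simp
  ring

lemma gss_le_one (y : ℝ) : gss y ≤ 1 := by
  unfold gss
  have h1 : (1:ℝ) ≤ Real.sqrt (2 * Real.pi) := by
    rw [show (1:ℝ) = Real.sqrt 1 by simp]
    exact Real.sqrt_le_sqrt (by nlinarith [Real.pi_gt_three])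
  have h2 : Real.exp (-y ^ 2 / 2) ≤ 1 := Real.exp_le_one_iff.2 (by nlinarith [sq_nonneg y])
  calc 1 / Real.sqrt (2 * Real.pi) * Real.exp (-y ^ 2 / 2)
      ≤ 1 * 1 := by
        apply mul_le_mul _ h2 (Real.exp_nonneg _) zero_le_one
        rw [div_le_one (by linarith)]; exact h1
    _ = 1 := by ring

lemma H_hasDerivAt {r : ℝ} (hr : r ∈ Set.Ioo (-1:ℝ) 1) (t₁ t₂ : ℝ) :
    HasDerivAt (fun ρ => ∫ x in Set.Iic t₁,
        gss x * stdNormalCDF ((t₂ - ρ * x) / Real.sqrt (1 - ρ ^ 2)))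
      (biNormalDensity r t₁ t₂) r := by
  obtain ⟨hm1, hp1⟩ := hr
  have habsr : |r| < 1 := abs_lt.2 ⟨hm1, hp1⟩
  have hr2 : r ^ 2 < 1 := by nlinarith [abs_nonneg r, sq_abs r]
  set m : ℝ := (1 + |r|) / 2 with hm_def
  have hm0 : 0 < m := by rw [hm_def]; have := abs_nonneg r; linarith
  have hmlt : m < 1 := by rw [hm_def]; linarith
  set δ : ℝ := 1 - m ^ 2 with hδ_def
  have hδ : 0 < δ := by rw [hδ_def]; nlinarith
  set ε : ℝ := (1 - |r|) / 2 with hε_def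
  have hε : 0 < ε := by rw [hε_def]; linarith
  have hball : ∀ ρ ∈ Metric.ball r ε, |ρ| < m ∧ δ < 1 - ρ ^ 2 ∧ ρ ^ 2 < 1 := by
    intro ρ hρ
    rw [Metric.mem_ball, Real.dist_eq] at hρ
    have h1 : |ρ| < m := by
      calc |ρ| ≤ |ρ - r| + |r| := by
            simpa using abs_add_le (ρ - r) r
        _ < ε + |r| := by linarith
        _ = m := by rw [hε_def, hm_def]; ring
    have h2 : ρ ^ 2 < m ^ 2 := by
      have := abs_nonneg ρ
      nlinarith [sq_abs ρ]
    exact ⟨h1, by rw [hδ_def]; linarith, by nlinarith⟩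
  -- the bound
  set bound : ℝ → ℝ := fun x => (1 + |t₂|) / (δ * Real.sqrt δ) * ((1 + |x|) * gss x)
    with hbound_def
  have hb1 : Integrable (fun x : ℝ => (1 + |x|) * gss x) := by
    have heq : (fun x : ℝ => (1 + |x|) * gss x)
        = fun x => gss x + (1 / Real.sqrt (2 * Real.pi)) * (|x| * Real.exp (-x ^ 2 / 2)) := by
      funext x; unfold gss; ring
    rw [heq]
    exact gss_integrable.add (absx_exp_integrable.const_mul _)
  have bound_int : Integrable bound (volume.restrict (Set.Iic t₁)) :=
    ((hb1.const_mul _).restrict)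
  have hF_meas : ∀ᶠ ρ in 𝓝 r, AEStronglyMeasurable
      (fun x => gss x * stdNormalCDF ((t₂ - ρ * x) / Real.sqrt (1 - ρ ^ 2)))
      (volume.restrict (Set.Iic t₁)) := by
    filter_upwards with ρ
    exact (gss_cont.mul (stdNormalCDF_continuous.comp
      ((continuous_const.sub (continuous_const.mul continuous_id)).div_const _))).aestronglyMeasurable
  have hC : 0 ≤ ∫ x, gss x := integral_nonneg fun x => (gss_pos x).le
  have hF_int : Integrable (fun x => gss x * stdNormalCDF ((t₂ - r * x) / Real.sqrt (1 - r ^ 2)))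
      (volume.restrict (Set.Iic t₁)) := by
    refine Integrable.mono' ((gss_integrable.const_mul (∫ x, gss x)).restrict) ?_ ?_
    · exact (gss_cont.mul (stdNormalCDF_continuous.comp
        ((continuous_const.sub (continuous_const.mul continuous_id)).div_const _))).aestronglyMeasurable
    · filter_upwards with x
      rw [Real.norm_eq_abs, abs_mul, abs_of_pos (gss_pos x),
        abs_of_nonneg (stdNormalCDF_nonneg _)]
      calc gss x * stdNormalCDF ((t₂ - r * x) / Real.sqrt (1 - r ^ 2))
          ≤ gss x * ∫ y, gss y := by
            exact mul_le_mul_of_nonneg_left (stdNormalCDF_le _) (gss_pos x).le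
        _ = (∫ y, gss y) * gss x := by ring
  have hF'_meas : AEStronglyMeasurable (fun x => DWF' t₂ r x)
      (volume.restrict (Set.Iic t₁)) := by
    refine Continuous.aestronglyMeasurable ?_
    unfold DWF'
    exact gss_cont.mul ((gss_cont.comp
      ((continuous_const.sub (continuous_const.mul continuous_id)).div_const _)).mul
      ((continuous_const.sub continuous_id).div_const _))
  have h_bound : ∀ᵐ x ∂(volume.restrict (Set.Iic t₁)), ∀ ρ ∈ Metric.ball r ε,
      ‖DWF' t₂ ρ x‖ ≤ bound x := by
    filter_upwards with x ρ hρ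
    obtain ⟨habs, hδρ, hρ2⟩ := hball ρ hρ
    have h1ρ : (0:ℝ) < 1 - ρ ^ 2 := lt_trans hδ hδρ
    have hsρ : Real.sqrt δ ≤ Real.sqrt (1 - ρ ^ 2) := Real.sqrt_le_sqrt hδρ.le
    have hsδ : (0:ℝ) < Real.sqrt δ := Real.sqrt_pos.2 hδ
    have hden : δ * Real.sqrt δ ≤ (1 - ρ ^ 2) * Real.sqrt (1 - ρ ^ 2) :=
      mul_le_mul hδρ.le hsρ hsδ.le h1ρ.le
    rw [Real.norm_eq_abs]
    unfold DWF'
    rw [abs_mul, abs_mul, abs_div, abs_of_pos (gss_pos x),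
      abs_of_pos (gss_pos _), abs_of_pos (by positivity : (0:ℝ) < (1 - ρ ^ 2) * Real.sqrt (1 - ρ ^ 2))]
    have hnum : |ρ * t₂ - x| ≤ (1 + |t₂|) * (1 + |x|) := by
      have h1 : |ρ * t₂ - x| ≤ |ρ| * |t₂| + |x| := by
        calc |ρ * t₂ - x| ≤ |ρ * t₂| + |x| := abs_sub _ _
          _ = |ρ| * |t₂| + |x| := by rw [abs_mul]
      nlinarith [abs_nonneg t₂, abs_nonneg x, abs_nonneg ρ]
    calc gss x * (gss ((t₂ - ρ * x) / Real.sqrt (1 - ρ ^ 2)) *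
          (|ρ * t₂ - x| / ((1 - ρ ^ 2) * Real.sqrt (1 - ρ ^ 2))))
        ≤ gss x * (1 * ((1 + |t₂|) * (1 + |x|) / (δ * Real.sqrt δ))) := by
          gcongr
          all_goals first
            | exact (gss_pos x).le
            | exact gss_le_one _
            | exact hnum
            | assumption
      _ = bound x := by rw [hbound_def]; ring
  have h_diff : ∀ᵐ x ∂(volume.restrict (Set.Iic t₁)), ∀ ρ ∈ Metric.ball r ε,
      HasDerivAt (fun ρ => gss x * stdNormalCDF ((t₂ - ρ * x) / Real.sqrt (1 - ρ ^ 2)))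
        (DWF' t₂ ρ x) ρ := by
    filter_upwards with x ρ hρ
    exact DWF'_hasDerivAt (hball ρ hρ).2.2 t₂ x
  have main := hasDerivAt_integral_of_dominated_loc_of_deriv_le (Metric.ball_mem_nhds r hε) hF_meas hF_int hF'_meas
    h_bound bound_int h_diff
  have h2 := main.2
  rwa [show (∫ x in Set.Iic t₁, DWF' t₂ r x) = biNormalDensity r t₁ t₂ from
    integral_DWF' hr2 t₁ t₂] at h2

/-- Drezner–Wesolowsky formula: for `ρ ∈ (-1, 1)`,
`Φ_ρ(t₁,t₂) = (1/2π) ∫₀^ρ (1/√(1-r²)) exp(-(t₁²-2rt₁t₂+t₂²)/(2(1-r²))) dr + Φ(t₁)Φ(t₂)`. -/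
theorem biNormalCDF_drezner_wesolowsky (ρ t₁ t₂ : ℝ) (hρ : ρ ∈ Set.Ioo (-1 : ℝ) 1) :
    biNormalCDF ρ t₁ t₂ =
      (1 / (2 * Real.pi)) * (∫ r in (0 : ℝ)..ρ,
        (1 / Real.sqrt (1 - r ^ 2)) *
          Real.exp (-(t₁ ^ 2 - 2 * r * t₁ * t₂ + t₂ ^ 2) / (2 * (1 - r ^ 2)))) +
      stdNormalCDF t₁ * stdNormalCDF t₂ := by
  obtain ⟨hm1, hp1⟩ := hρ
  have hsub : Set.uIcc (0:ℝ) ρ ⊆ Set.Ioo (-1:ℝ) 1 := by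
    intro r hr
    rw [Set.mem_uIcc] at hr
    rcases hr with ⟨h1, h2⟩ | ⟨h1, h2⟩ <;> exact ⟨by linarith, by linarith⟩
  -- the integrand equals biNormalDensity r t₁ t₂
  have hintegrand : ∀ r : ℝ, 1 / (2 * Real.pi) *
      ((1 / Real.sqrt (1 - r ^ 2)) *
        Real.exp (-(t₁ ^ 2 - 2 * r * t₁ * t₂ + t₂ ^ 2) / (2 * (1 - r ^ 2))))
      = biNormalDensity r t₁ t₂ := by
    intro r
    rw [biNormalDensity, ← mul_assoc, div_mul_div_comm]
    ring_nf
  -- continuity of r ↦ biNormalDensity r t₁ t₂ on uIcc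
  have hcont : ContinuousOn (fun r => biNormalDensity r t₁ t₂) (Set.uIcc (0:ℝ) ρ) := by
    have hne : ∀ r ∈ Set.uIcc (0:ℝ) ρ, 2 * Real.pi * Real.sqrt (1 - r ^ 2) ≠ 0 := by
      intro r hr
      obtain ⟨h1, h2⟩ := hsub hr
      have : (0:ℝ) < 1 - r ^ 2 := by nlinarith
      positivity
    have hne2 : ∀ r ∈ Set.uIcc (0:ℝ) ρ, 2 * (1 - r ^ 2) ≠ 0 := by
      intro r hr
      obtain ⟨h1, h2⟩ := hsub hr
      have : (0:ℝ) < 1 - r ^ 2 := by nlinarith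
      positivity
    apply ContinuousOn.mul
    · exact ContinuousOn.div continuousOn_const
        (by fun_prop) hne
    · exact (Real.continuous_exp.comp_continuousOn
        (ContinuousOn.div (by fun_prop) (by fun_prop) hne2))
  have hFTC := intervalIntegral.integral_eq_sub_of_hasDerivAt
    (f := fun r => ∫ x in Set.Iic t₁,
      gss x * stdNormalCDF ((t₂ - r * x) / Real.sqrt (1 - r ^ 2)))
    (f' := fun r => biNormalDensity r t₁ t₂)
    (fun r hr => H_hasDerivAt (hsub hr) t₁ t₂)
    (hcont.intervalIntegrable)
  have hH0 : (∫ x in Set.Iic t₁,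
      gss x * stdNormalCDF ((t₂ - (0:ℝ) * x) / Real.sqrt (1 - (0:ℝ) ^ 2)))
      = stdNormalCDF t₁ * stdNormalCDF t₂ := by
    have : ∀ x : ℝ, (t₂ - (0:ℝ) * x) / Real.sqrt (1 - (0:ℝ) ^ 2) = t₂ := by
      intro x; simp
    simp only [this]
    rw [integral_mul_const, ← stdNormalCDF_eq]
  rw [biNormalCDF_rep ⟨hm1, hp1⟩ t₁ t₂]
  have hmul : (1 / (2 * Real.pi)) * (∫ r in (0:ℝ)..ρ,
      (1 / Real.sqrt (1 - r ^ 2)) *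
        Real.exp (-(t₁ ^ 2 - 2 * r * t₁ * t₂ + t₂ ^ 2) / (2 * (1 - r ^ 2))))
      = ∫ r in (0:ℝ)..ρ, biNormalDensity r t₁ t₂ := by
    rw [← intervalIntegral.integral_const_mul]
    exact intervalIntegral.integral_congr fun r _ => hintegrand r
  rw [hmul, hFTC]
  rw [hH0]
  ring
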